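/- Let h̃ ∈ ℝⁿ and define s ∈ ℝⁿ by sᵢ = sgn(h̃ᵢ), where sgn is the modified sign function (sgn(x) = -1 for x ≤ 0, sgn(x) = 1 for x > 0). Then s is the unique minimizer of h ↦ ⟨h, 1⟩ = Σᵢ hᵢ over the set {h ∈ [-1,1]ⁿ : ⟨h, h̃⟩ = ‖h̃‖₁}; that is, s belongs to this set, and every h in this set satisfies Σᵢ hᵢ ≥ Σᵢ sᵢ with equality only for h = s. -/
import Mathlib


open Finset

/-- The modified sign function: `sgn(x) = -1` if `x ≤ 0` and `sgn(x) = 1` if `x > 0`. -/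
noncomputable def msgn (x : ℝ) : ℝ := if x ≤ 0 then -1 else 1

lemma msgn_mul_self (x : ℝ) : msgn x * x = |x| := by
  unfold msgn
  split
  · rw [abs_of_nonpos (by linarith)]; ring
  · rw [abs_of_pos (by linarith)]; ring

/-- For `h̃ ∈ ℝⁿ`, the vector `s` with `sᵢ = sgn(h̃ᵢ)` (modified sign) is
the unique minimizer of `h ↦ Σᵢ hᵢ` over `{h ∈ [-1,1]ⁿ : ⟨h, h̃⟩ = ‖h̃‖₁}`: `s` belongs
to this set, and every `h` in the set satisfies `Σᵢ hᵢ ≥ Σᵢ sᵢ`, with equality only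
for `h = s`. -/
theorem msgn_unique_minimizer (n : ℕ) (ht : Fin n → ℝ) (s : Fin n → ℝ)
    (hs : ∀ i, s i = msgn (ht i)) :
    ((∀ i, -1 ≤ s i ∧ s i ≤ 1) ∧ (∑ i, s i * ht i) = ∑ i, |ht i|) ∧
    (∀ h : Fin n → ℝ, (∀ i, -1 ≤ h i ∧ h i ≤ 1) → (∑ i, h i * ht i) = (∑ i, |ht i|) →
      (∑ i, s i) ≤ (∑ i, h i) ∧ ((∑ i, h i) = (∑ i, s i) → h = s)) := by
  constructor
  · constructor
    · intro i
      rw [hs i]; unfold msgn; split <;> norm_num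
    · exact Finset.sum_congr rfl fun i _ => by rw [hs i, msgn_mul_self]
  · intro h hb hc
    have hle : ∀ i ∈ Finset.univ, h i * ht i ≤ |ht i| := by
      intro i _
      calc h i * ht i ≤ |h i * ht i| := le_abs_self _
        _ = |h i| * |ht i| := abs_mul _ _
        _ ≤ 1 * |ht i| := by
            apply mul_le_mul_of_nonneg_right _ (abs_nonneg _)
            exact abs_le.mpr ⟨(hb i).1, (hb i).2⟩
        _ = |ht i| := one_mul _
    have heq : ∀ i ∈ Finset.univ, h i * ht i = |ht i| :=
      (Finset.sum_eq_sum_iff_of_le hle).mp hc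
    have hterm : ∀ i ∈ Finset.univ, s i ≤ h i := by
      intro i _
      rw [hs i]; unfold msgn
      split
      · exact (hb i).1
      · rename_i hpos
        push_neg at hpos
        have := heq i (Finset.mem_univ i)
        rw [abs_of_pos hpos] at this
        nlinarith
    have hsum : (∑ i, s i) ≤ (∑ i, h i) := Finset.sum_le_sum hterm
    refine ⟨hsum, fun he => ?_⟩
    funext i
    exact ((Finset.sum_eq_sum_iff_of_le hterm).mp he.symm i (Finset.mem_univ i)).symm
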